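/- Let 0 < μ < 1 and define t(c) = ((1+μ)/2)·h((c+μ)/(1+μ)) and r(c) = ((1+μ)/2)·h((c+1)/(1+μ)) for c ∈ [−μ, μ]. Then t(c) < r(c) for c ∈ (−μ, 0), t(0) = r(0), and t(c) > r(c) for c ∈ (0, μ). -/

import Mathlib

/-- Binary entropy in bits (with `h 0 = h 1 = 0` since `logb 2 0 = 0`). -/
noncomputable def binEnt (p : ℝ) : ℝ := -(p * Real.logb 2 p) - (1 - p) * Real.logb 2 (1 - p)

lemma binEnt_eq (p : ℝ) : binEnt p = Real.binEntropy p / Real.log 2 := by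
  simp [binEnt, Real.binEntropy, Real.logb, Real.log_inv]
  ring

lemma binEnt_one_sub (p : ℝ) : binEnt (1 - p) = binEnt p := by
  rw [binEnt_eq, binEnt_eq, Real.binEntropy_one_sub]

/-- Key: closer to 1/2 means larger entropy. -/
lemma binEnt_key {p q : ℝ} (hp : p ∈ Set.Icc (0:ℝ) 1) (hq : q ∈ Set.Icc (0:ℝ) 1)
    (h : |q - 2⁻¹| < |p - 2⁻¹|) : binEnt p < binEnt q := by
  have h2 : (0:ℝ) < Real.log 2 := Real.log_pos (by norm_num)
  rw [binEnt_eq, binEnt_eq, div_lt_div_iff_of_pos_right h2]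
  set a := 2⁻¹ - |p - 2⁻¹| with ha
  set b := 2⁻¹ - |q - 2⁻¹| with hb
  have hpa : Real.binEntropy a = Real.binEntropy p := by
    rcases le_or_gt p 2⁻¹ with hle | hlt
    · rw [ha, abs_of_nonpos (by linarith)]; ring_nf
    · rw [ha, abs_of_pos (by linarith)]
      have : 2⁻¹ - (p - 2⁻¹) = 1 - p := by ring
      rw [this, Real.binEntropy_one_sub]
  have hqb : Real.binEntropy b = Real.binEntropy q := by
    rcases le_or_gt q 2⁻¹ with hle | hlt
    · rw [hb, abs_of_nonpos (by linarith)]; ring_nf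
    · rw [hb, abs_of_pos (by linarith)]
      have : 2⁻¹ - (q - 2⁻¹) = 1 - q := by ring
      rw [this, Real.binEntropy_one_sub]
  rw [← hpa, ← hqb]
  have hpabs : |p - 2⁻¹| ≤ 2⁻¹ := by
    rw [abs_le]; constructor <;> [linarith [hp.1]; linarith [hp.2]]
  have hqabs : (0:ℝ) ≤ |q - 2⁻¹| := abs_nonneg _
  apply Real.binEntropy_strictMonoOn
  · exact ⟨by rw [ha]; linarith, by rw [ha]; linarith⟩
  · exact ⟨by rw [hb]; linarith, by rw [hb]; linarith⟩
  · rw [ha, hb]; linarith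

/-- Lemma 3 of the paper: comparison of `t(c) = ((1+μ)/2)·h((c+μ)/(1+μ))` and
`r(c) = ((1+μ)/2)·h((c+1)/(1+μ))` on `[-μ, μ]`. -/
theorem lemma_t_vs_r (μ : ℝ) (hμ0 : 0 < μ) (hμ1 : μ < 1) :
    (∀ c ∈ Set.Ioo (-μ) (0 : ℝ),
        ((1 + μ) / 2) * binEnt ((c + μ) / (1 + μ)) <
          ((1 + μ) / 2) * binEnt ((c + 1) / (1 + μ))) ∧
    ((1 + μ) / 2) * binEnt ((0 + μ) / (1 + μ)) =
        ((1 + μ) / 2) * binEnt ((0 + 1) / (1 + μ)) ∧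
    (∀ c ∈ Set.Ioo (0 : ℝ) μ,
        ((1 + μ) / 2) * binEnt ((c + 1) / (1 + μ)) <
          ((1 + μ) / 2) * binEnt ((c + μ) / (1 + μ))) := by
  have hD : (0:ℝ) < 1 + μ := by linarith
  have hfac : (0:ℝ) < (1 + μ) / 2 := by linarith
  have mem : ∀ x : ℝ, 0 ≤ x → x ≤ 1 + μ → x / (1 + μ) ∈ Set.Icc (0:ℝ) 1 := by
    intro x h0 h1
    exact ⟨div_nonneg h0 hD.le, (div_le_one hD).2 h1⟩
  have eform : ∀ x : ℝ, x / (1 + μ) - 2⁻¹ = (2 * x - (1 + μ)) / (2 * (1 + μ)) := by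
    intro x; field_simp
  have habs : ∀ a b : ℝ, (2 * a - (1 + μ))^2 < (2 * b - (1 + μ))^2 →
      |a / (1 + μ) - 2⁻¹| < |b / (1 + μ) - 2⁻¹| := by
    intro a b hlt
    rw [eform, eform, ← sq_lt_sq, div_pow, div_pow,
      div_lt_div_iff_of_pos_right (by positivity)]
    exact hlt
  refine ⟨?_, ?_, ?_⟩
  · rintro c ⟨hc1, hc2⟩
    apply mul_lt_mul_of_pos_left _ hfac
    apply binEnt_key (mem _ (by linarith) (by linarith)) (mem _ (by linarith) (by linarith))
    apply habs
    nlinarith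
  · have : (0 + 1) / (1 + μ) = 1 - (0 + μ) / (1 + μ) := by field_simp; ring
    rw [this, binEnt_one_sub]
  · rintro c ⟨hc1, hc2⟩
    apply mul_lt_mul_of_pos_left _ hfac
    apply binEnt_key (mem _ (by linarith) (by linarith)) (mem _ (by linarith) (by linarith))
    apply habs
    nlinarith
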